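/- Let d, g, y be rational numbers and suppose y₊ ∈ ℚ is the least element of the set { −(⌈d·k⌉ + ⌊g·k⌋)/k : k a positive integer }. (i) If neither y nor d is an integer, and ŷ₊ ∈ ℚ is the least element of the set { −(−1 + ⌈y·k⌉ + ⌈d·k⌉)/k : k a positive integer }, then y ≤ y₊ if and only if g < ŷ₊. (ii) If y is an integer or d is an integer, then y ≤ y₊ if and only if g ≤ −y − d. -/

import Mathlib

/-- Claim 4.3 (ceiling version): let `y₊` be the least element of
`{-(⌈dk⌉ + ⌊gk⌋)/k : k > 0}`.
(i) If neither `y` nor `d` is an integer and `ŷ₊` is the least element of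
`{-(-1 + ⌈yk⌉ + ⌈dk⌉)/k : k > 0}`, then `y ≤ y₊ ↔ g < ŷ₊`.
(ii) If `y` or `d` is an integer, then `y ≤ y₊ ↔ g ≤ -y - d`. -/
theorem stmt_5 (d g y ypos : ℚ)
    (h : IsLeast {x : ℚ | ∃ k : ℕ, 0 < k ∧
      x = -((⌈d * (k:ℚ)⌉ : ℚ) + (⌊g * (k:ℚ)⌋ : ℚ))/(k:ℚ)} ypos) :
    ((¬∃ z : ℤ, (z:ℚ) = y) → (¬∃ z : ℤ, (z:ℚ) = d) →
      ∀ yhatpos : ℚ, IsLeast {x : ℚ | ∃ k : ℕ, 0 < k ∧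
        x = -(-1 + (⌈y * (k:ℚ)⌉ : ℚ) + (⌈d * (k:ℚ)⌉ : ℚ))/(k:ℚ)} yhatpos →
      (y ≤ ypos ↔ g < yhatpos)) ∧
    (((∃ z : ℤ, (z:ℚ) = y) ∨ (∃ z : ℤ, (z:ℚ) = d)) →
      (y ≤ ypos ↔ g ≤ -y - d)) := by
  -- single-k equivalence for the y side
  have elemy : ∀ k : ℕ, 0 < k →
      (y ≤ -((⌈d * (k:ℚ)⌉ : ℚ) + (⌊g * (k:ℚ)⌋ : ℚ))/(k:ℚ) ↔
        ⌈y * (k:ℚ)⌉ + ⌈d * (k:ℚ)⌉ + ⌊g * (k:ℚ)⌋ ≤ 0) := by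
    intro k hk
    have hk' : (0:ℚ) < k := by exact_mod_cast hk
    rw [le_div_iff₀ hk']
    constructor
    · intro hle
      have : ⌈y * (k:ℚ)⌉ ≤ -(⌈d * (k:ℚ)⌉ + ⌊g * (k:ℚ)⌋) := by
        rw [Int.ceil_le]; push_cast; linarith
      omega
    · intro hle
      have h1 : y * (k:ℚ) ≤ ((⌈y * (k:ℚ)⌉ : ℤ) : ℚ) := Int.le_ceil _
      have h2 : ((⌈y * (k:ℚ)⌉ : ℤ) : ℚ) ≤ ((-(⌈d * (k:ℚ)⌉ + ⌊g * (k:ℚ)⌋) : ℤ) : ℚ) := by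
        exact_mod_cast (by omega : ⌈y * (k:ℚ)⌉ ≤ -(⌈d * (k:ℚ)⌉ + ⌊g * (k:ℚ)⌋))
      push_cast at h2
      linarith
  have key : y ≤ ypos ↔ ∀ k : ℕ, 0 < k →
      ⌈y * (k:ℚ)⌉ + ⌈d * (k:ℚ)⌉ + ⌊g * (k:ℚ)⌋ ≤ 0 := by
    constructor
    · intro hy k hk
      exact (elemy k hk).1 (hy.trans (h.2 ⟨k, hk, rfl⟩))
    · intro hall
      obtain ⟨k, hk, hx⟩ := h.1
      rw [hx]
      exact (elemy k hk).2 (hall k hk)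
  constructor
  · intro _ _ yhatpos hhat
    have elemg : ∀ k : ℕ, 0 < k →
        (g < -(-1 + (⌈y * (k:ℚ)⌉ : ℚ) + (⌈d * (k:ℚ)⌉ : ℚ))/(k:ℚ) ↔
          ⌈y * (k:ℚ)⌉ + ⌈d * (k:ℚ)⌉ + ⌊g * (k:ℚ)⌋ ≤ 0) := by
      intro k hk
      have hk' : (0:ℚ) < k := by exact_mod_cast hk
      rw [lt_div_iff₀ hk']
      constructor
      · intro hlt
        have : g * (k:ℚ) < ((1 - ⌈y * (k:ℚ)⌉ - ⌈d * (k:ℚ)⌉ : ℤ) : ℚ) := by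
          push_cast; linarith
        have := Int.floor_lt.2 this
        omega
      · intro hle
        have : g * (k:ℚ) < ((1 - ⌈y * (k:ℚ)⌉ - ⌈d * (k:ℚ)⌉ : ℤ) : ℚ) := by
          exact Int.floor_lt.1 (by omega)
        push_cast at this
        linarith
    rw [key]
    constructor
    · intro hall
      obtain ⟨k, hk, hx⟩ := hhat.1
      rw [hx]
      exact (elemg k hk).2 (hall k hk)
    · intro hg k hk
      exact (elemg k hk).1 (lt_of_lt_of_le hg (hhat.2 ⟨k, hk, rfl⟩))
  · intro hint
    rw [key]
    constructor
    · -- limit argument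
      intro hall
      by_contra hgt
      push_neg at hgt
      have heps : 0 < g + y + d := by linarith
      obtain ⟨n, hn⟩ := exists_nat_gt (1 / (g + y + d))
      have hn0 : 0 < n := by
        rcases Nat.eq_zero_or_pos n with h0 | h0
        · subst h0; simp at hn; linarith [div_pos one_pos heps]
        · exact h0
      have hcond := hall n hn0
      have h1 : y * (n:ℚ) ≤ ((⌈y * (n:ℚ)⌉ : ℤ) : ℚ) := Int.le_ceil _
      have h2 : d * (n:ℚ) ≤ ((⌈d * (n:ℚ)⌉ : ℤ) : ℚ) := Int.le_ceil _
      have h3 : g * (n:ℚ) - 1 < ((⌊g * (n:ℚ)⌋ : ℤ) : ℚ) := Int.sub_one_lt_floor _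
      have hsum : ((⌈y * (n:ℚ)⌉ + ⌈d * (n:ℚ)⌉ + ⌊g * (n:ℚ)⌋ : ℤ) : ℚ) ≤ 0 := by
        exact_mod_cast hcond
      push_cast at hsum
      have hn' : 1 / (g + y + d) < (n:ℚ) := hn
      have hnpos : (0:ℚ) < n := by exact_mod_cast hn0
      have : 1 < (g + y + d) * n := by
        rw [div_lt_iff₀ heps] at hn'
        linarith
      nlinarith
    · intro hg k hk
      have hk' : (0:ℚ) ≤ k := by positivity
      have hgk : g * (k:ℚ) ≤ (-y - d) * (k:ℚ) :=
        mul_le_mul_of_nonneg_right hg hk'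
      rcases hint with ⟨z, hz⟩ | ⟨z, hz⟩
      · have hceil : ⌈y * (k:ℚ)⌉ = z * k := by
          rw [← hz]
          exact_mod_cast Int.ceil_intCast (R := ℚ) (z * (k:ℤ))
        have heq : (-y - d) * (k:ℚ) = -(d * (k:ℚ)) + ((-(z * k) : ℤ) : ℚ) := by
          rw [← hz]; push_cast; ring
        have hfl : ⌊(-y - d) * (k:ℚ)⌋ = -⌈d * (k:ℚ)⌉ + (-(z * k)) := by
          rw [heq, Int.floor_add_intCast, Int.floor_neg]
        have := Int.floor_mono hgk
        rw [hfl] at this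
        omega
      · have hceil : ⌈d * (k:ℚ)⌉ = z * k := by
          rw [← hz]
          exact_mod_cast Int.ceil_intCast (R := ℚ) (z * (k:ℤ))
        have heq : (-y - d) * (k:ℚ) = -(y * (k:ℚ)) + ((-(z * k) : ℤ) : ℚ) := by
          rw [← hz]; push_cast; ring
        have hfl : ⌊(-y - d) * (k:ℚ)⌋ = -⌈y * (k:ℚ)⌉ + (-(z * k)) := by
          rw [heq, Int.floor_add_intCast, Int.floor_neg]
        have := Int.floor_mono hgk
        rw [hfl] at this
        omega
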